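/- arXiv:0807.1338 — 2 statements merged into one kernel-verified Lean document; each statement's English description precedes it below -/
import Mathlib

section
/- Let ρ_{AA'BB'} = ρ_AB ⊗ ρ_{A'B'} be a tensor product of two bipartite density operators. Then the conditional min-entropy is additive: H_min(AA'|BB')_ρ = H_min(A|B)_{ρ_AB} + H_min(A'|B')_{ρ_{A'B'}}. -/
open Matrix
open scoped Kronecker ComplexConjugate ComplexOrder

noncomputable section

/-- Partial trace over the first (A) subsystem. -/
def ptraceA {A B : Type*} [Fintype A] (M : Matrix (A × B) (A × B) ℂ) :
    Matrix B B ℂ :=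
  Matrix.of fun i j => ∑ a : A, M (a, i) (a, j)

/-- Partial trace over the second (B) subsystem. -/
def ptraceB {A B : Type*} [Fintype B] (M : Matrix (A × B) (A × B) ℂ) :
    Matrix A A ℂ :=
  Matrix.of fun i j => ∑ b : B, M (i, b) (j, b)

/-- A density operator: positive semidefinite with unit trace. -/
def IsDensity {n : Type*} [Fintype n] (ρ : Matrix n n ℂ) : Prop :=
  ρ.PosSemidef ∧ ρ.trace = 1

/-- Conditional min-entropy `H_min(A|B)_ρ = - inf_σ D_∞(ρ ‖ id_A ⊗ σ)`, where the
infimum ranges over density operators `σ` on `B` and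
`D_∞(τ‖τ') = inf {λ | τ ≤ 2^λ τ'}`. -/
def Hmin {A B : Type*} [Fintype A] [Fintype B] [DecidableEq A] [DecidableEq B]
    (ρ : Matrix (A × B) (A × B) ℂ) : ℝ :=
  - sInf {l : ℝ | ∃ σ : Matrix B B ℂ, IsDensity σ ∧
      (((2 : ℝ) ^ l : ℝ) • ((1 : Matrix A A ℂ) ⊗ₖ σ) - ρ).PosSemidef}

open scoped Classical in
/-- Positive semidefinite square root (junk value `0` off the PSD cone). -/
def psqrt {n : Type*} [Fintype n] [DecidableEq n] (M : Matrix n n ℂ) : Matrix n n ℂ :=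
  if h : M.PosSemidef then
    h.1.eigenvectorUnitary.1 * diagonal ((↑) ∘ Real.sqrt ∘ h.1.eigenvalues) *
      (star h.1.eigenvectorUnitary : Matrix n n ℂ) else 0

/-- Trace norm `‖M‖₁ = tr √(Mᴴ M)`. -/
def traceNorm {n : Type*} [Fintype n] [DecidableEq n] (M : Matrix n n ℂ) : ℝ :=
  (psqrt (Mᴴ * M)).trace.re

/-- Fidelity `F(ρ,σ) = ‖√ρ √σ‖₁`. -/
def fidelity {n : Type*} [Fintype n] [DecidableEq n] (ρ σ : Matrix n n ℂ) : ℝ :=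
  traceNorm (psqrt ρ * psqrt σ)

/-- Choi matrix of a linear map on matrices. -/
def choi {B A' : Type*} [Fintype B] [DecidableEq B] [Fintype A']
    (F : Matrix B B ℂ →ₗ[ℂ] Matrix A' A' ℂ) : Matrix (B × A') (B × A') ℂ :=
  Matrix.of fun p q => (F (Matrix.single p.1 q.1 1)) p.2 q.2

/-- A quantum operation (CPTP map): completely positive (PSD Choi matrix, by Choi's
theorem) and trace-preserving. -/
def IsCPTP {B A' : Type*} [Fintype B] [DecidableEq B] [Fintype A']
    (F : Matrix B B ℂ →ₗ[ℂ] Matrix A' A' ℂ) : Prop :=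
  (choi F).PosSemidef ∧ ∀ M : Matrix B B ℂ, (F M).trace = M.trace

/-- The map `id_A ⊗ F` applied to a bipartite operator. -/
def idTensor {A B A' : Type*} [Fintype B]
    (F : Matrix B B ℂ →ₗ[ℂ] Matrix A' A' ℂ) (ρ : Matrix (A × B) (A × B) ℂ) :
    Matrix (A × A') (A × A') ℂ :=
  Matrix.of fun p q => (F (Matrix.of fun b b' => ρ (p.1, b) (q.1, b'))) p.2 q.2

/-- The quadratic form `⟨ψ|M|ψ⟩` (real part). -/
def pureOverlap {n : Type*} [Fintype n] (ψ : n → ℂ) (M : Matrix n n ℂ) : ℝ :=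
  (∑ p, ∑ q, conj (ψ p) * M p q * ψ q).re

/-- The maximally entangled state `|Φ⟩ = d^{-1/2} ∑ₓ |x⟩|x⟩`. -/
def maxEnt (A : Type*) [Fintype A] [DecidableEq A] : A × A → ℂ :=
  fun p => if p.1 = p.2 then ((Real.sqrt (Fintype.card A))⁻¹ : ℝ) else 0

/-- `q_corr(A|B)_ρ`: `d_A` times the maximal squared fidelity with the maximally
entangled state achievable by quantum operations on `B`. -/
def qcorr {A B : Type*} [Fintype A] [Fintype B] [DecidableEq A] [DecidableEq B]
    (ρ : Matrix (A × B) (A × B) ℂ) : ℝ :=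
  (Fintype.card A : ℝ) *
    sSup {x : ℝ | ∃ F : Matrix B B ℂ →ₗ[ℂ] Matrix A A ℂ, IsCPTP F ∧
      x = pureOverlap (maxEnt A) (idTensor F ρ)}

/-- The completely mixed state. -/
def mixed (A : Type*) [Fintype A] [DecidableEq A] : Matrix A A ℂ :=
  ((Fintype.card A : ℂ)⁻¹) • (1 : Matrix A A ℂ)

/-- `q_decpl(A|B)_ρ`: `d_A` times the maximal squared fidelity with `τ_A ⊗ σ_B`. -/
def qdecpl {A B : Type*} [Fintype A] [Fintype B] [DecidableEq A] [DecidableEq B]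
    (ρ : Matrix (A × B) (A × B) ℂ) : ℝ :=
  (Fintype.card A : ℝ) *
    sSup {x : ℝ | ∃ σ : Matrix B B ℂ, IsDensity σ ∧
      x = (fidelity ρ ((mixed A) ⊗ₖ σ)) ^ 2}

/-- Reduced state `tr_C |ψ⟩⟨ψ|` of a pure state `ψ` on `(A ⊗ B) ⊗ C`. -/
def redL {S C : Type*} [Fintype C] (ψ : S × C → ℂ) : Matrix S S ℂ :=
  Matrix.of fun s s' => ∑ c, ψ (s, c) * conj (ψ (s', c))

/-- Reduced state `tr_B |ψ⟩⟨ψ|` on `A ⊗ C` of a pure state `ψ` on `(A ⊗ B) ⊗ C`. -/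
def redAC {A B C : Type*} [Fintype B] (ψ : (A × B) × C → ℂ) :
    Matrix (A × C) (A × C) ℂ :=
  Matrix.of fun p q => ∑ b, ψ ((p.1, b), p.2) * conj (ψ ((q.1, b), q.2))


/-- The tensor product `ρ_AB ⊗ ρ_{A'B'}`, arranged on `(A ⊗ A') ⊗ (B ⊗ B')`. -/
def prodState {A A' B B' : Type*}
    (ρ1 : Matrix (A × B) (A × B) ℂ) (ρ2 : Matrix (A' × B') (A' × B') ℂ) :
    Matrix ((A × A') × (B × B')) ((A × A') × (B × B')) ℂ :=
  Matrix.of fun p q =>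
    ρ1 (p.1.1, p.2.1) (q.1.1, q.2.1) * ρ2 (p.1.2, p.2.2) (q.1.2, q.2.2)


lemma quad_expand {n : Type*} [Fintype n] (M : Matrix n n ℂ) (x : n → ℂ) :
    star x ⬝ᵥ M *ᵥ x = ∑ i, ∑ j, conj (x i) * M i j * x j := by
  simp [dotProduct, mulVec, Finset.mul_sum, mul_assoc]

lemma herm_entry {n : Type*} {M : Matrix n n ℂ} (hM : M.IsHermitian) (i j : n) :
    conj (M i j) = M j i := by
  conv_rhs => rw [← hM]
  simp [conjTranspose_apply]

lemma herm_quad_im {n : Type*} [Fintype n] {M : Matrix n n ℂ} (hM : M.IsHermitian)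
    (x : n → ℂ) : (star x ⬝ᵥ M *ᵥ x).im = 0 := by
  rw [← Complex.conj_eq_iff_im]
  rw [quad_expand, map_sum]
  rw [Finset.sum_comm]
  refine Finset.sum_congr rfl fun i _ => ?_
  rw [map_sum]
  refine Finset.sum_congr rfl fun j _ => ?_
  simp only [_root_.map_mul, Complex.conj_conj, herm_entry hM]
  ring

lemma posSemidef_of_re {n : Type*} [Fintype n] {M : Matrix n n ℂ} (hM : M.IsHermitian)
    (h : ∀ x : n → ℂ, 0 ≤ (star x ⬝ᵥ M *ᵥ x).re) : M.PosSemidef := by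
  refine Matrix.PosSemidef.of_dotProduct_mulVec_nonneg hM fun x => ?_
  rw [Complex.le_def]
  exact ⟨by simpa using h x, by simp [herm_quad_im hM x]⟩

lemma psd_quad_re_nonneg {n : Type*} [Fintype n] {M : Matrix n n ℂ} (hM : M.PosSemidef)
    (x : n → ℂ) : 0 ≤ (star x ⬝ᵥ M *ᵥ x).re := by
  have := hM.dotProduct_mulVec_nonneg x; rw [Complex.le_def] at this; simpa using this.1

lemma psd_quad_eq_re {n : Type*} [Fintype n] {M : Matrix n n ℂ} (hM : M.PosSemidef)
    (x : n → ℂ) : star x ⬝ᵥ M *ᵥ x = (((star x ⬝ᵥ M *ᵥ x).re : ℝ) : ℂ) := by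
  refine Complex.ext (by simp) ?_
  simp [herm_quad_im hM.1 x]

lemma kron_conjT {m n p q : Type*} (M : Matrix m n ℂ) (N : Matrix p q ℂ) :
    (M ⊗ₖ N)ᴴ = Mᴴ ⊗ₖ Nᴴ := by
  ext ⟨i, j⟩ ⟨k, l⟩
  simp [conjTranspose_apply, kroneckerMap_apply]

open MatrixOrder in
lemma psd_factor {n : Type*} [Fintype n] {M : Matrix n n ℂ} (h : M.PosSemidef) :
    ∃ C : Matrix n n ℂ, M = Cᴴ * C := by
  classical
  obtain ⟨a, rfl⟩ := CStarAlgebra.nonneg_iff_eq_star_mul_self.mp h.nonneg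
  exact ⟨a, by simp [star_eq_conjTranspose]⟩

lemma psd_kron {m n : Type*} [Fintype m] [Fintype n] {M : Matrix m m ℂ} {N : Matrix n n ℂ}
    (hM : M.PosSemidef) (hN : N.PosSemidef) : (M ⊗ₖ N).PosSemidef := by
  obtain ⟨C, rfl⟩ := psd_factor hM
  obtain ⟨D, rfl⟩ := psd_factor hN
  rw [Matrix.mul_kronecker_mul, ← kron_conjT]
  exact Matrix.posSemidef_conjTranspose_mul_self _

lemma herm_smul_real {n : Type*} {M : Matrix n n ℂ} (hM : M.IsHermitian) (r : ℝ) :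
    (r • M).IsHermitian := by
  unfold Matrix.IsHermitian
  rw [conjTranspose_smul, star_trivial, hM]

lemma psd_smul_real {n : Type*} [Fintype n] {M : Matrix n n ℂ} (hM : M.PosSemidef)
    {r : ℝ} (hr : 0 ≤ r) : (r • M).PosSemidef := by
  refine Matrix.PosSemidef.of_dotProduct_mulVec_nonneg (herm_smul_real hM.1 r) fun x => ?_
  have : star x ⬝ᵥ (r • M) *ᵥ x = (r : ℂ) * (star x ⬝ᵥ M *ᵥ x) := by
    simp [quad_expand, Finset.mul_sum, Matrix.smul_apply, Complex.real_smul]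
    exact Finset.sum_congr rfl fun i _ => Finset.sum_congr rfl fun j _ => by ring
  rw [this]
  exact mul_nonneg (by exact_mod_cast hr) (hM.dotProduct_mulVec_nonneg x)

lemma quad_single {n : Type*} [Fintype n] [DecidableEq n] (M : Matrix n n ℂ) (p : n) :
    star (Pi.single p 1 : n → ℂ) ⬝ᵥ M *ᵥ (Pi.single p 1 : n → ℂ) = M p p := by
  rw [quad_expand]
  simp [Pi.single_apply]

lemma kron_smul_right {m n : Type*} (M : Matrix m m ℂ) (r : ℝ) (N : Matrix n n ℂ) :
    M ⊗ₖ (r • N) = r • (M ⊗ₖ N) := by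
  ext ⟨i, j⟩ ⟨k, l⟩
  simp [kroneckerMap_apply, Complex.real_smul]
  ring

def Dset {A B : Type*} [Fintype A] [Fintype B] [DecidableEq A] [DecidableEq B]
    (ρ : Matrix (A × B) (A × B) ℂ) : Set ℝ :=
  {l : ℝ | ∃ σ : Matrix B B ℂ, IsDensity σ ∧
      (((2 : ℝ) ^ l : ℝ) • ((1 : Matrix A A ℂ) ⊗ₖ σ) - ρ).PosSemidef}


lemma quad_one {n : Type*} [Fintype n] [DecidableEq n] (x : n → ℂ) :
    star x ⬝ᵥ (1 : Matrix n n ℂ) *ᵥ x = ((∑ j, Complex.normSq (x j) : ℝ) : ℂ) := by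
  rw [one_mulVec]
  simp only [dotProduct, Pi.star_apply, Complex.star_def]
  push_cast
  exact Finset.sum_congr rfl fun i _ => by rw [mul_comm, Complex.mul_conj]

lemma psd_quad_le_trace {n : Type*} [Fintype n] {ρ : Matrix n n ℂ} (h : ρ.PosSemidef)
    (x : n → ℂ) : (star x ⬝ᵥ ρ *ᵥ x).re ≤ ρ.trace.re * ∑ j, Complex.normSq (x j) := by
  obtain ⟨C, rfl⟩ := psd_factor h
  have h1 : star x ⬝ᵥ (Cᴴ * C) *ᵥ x = star (C *ᵥ x) ⬝ᵥ (C *ᵥ x) := by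
    rw [← mulVec_mulVec, dotProduct_mulVec, ← star_mulVec]
  have h2 : (star x ⬝ᵥ (Cᴴ * C) *ᵥ x).re = ∑ i, Complex.normSq ((C *ᵥ x) i) := by
    rw [h1]
    have : star (C *ᵥ x) ⬝ᵥ (C *ᵥ x) = ((∑ i, Complex.normSq ((C *ᵥ x) i) : ℝ) : ℂ) := by
      simp only [dotProduct, Pi.star_apply, Complex.star_def]
      push_cast
      exact Finset.sum_congr rfl fun i _ => by rw [mul_comm, Complex.mul_conj]
    rw [this, Complex.ofReal_re]
  have h3 : (Cᴴ * C).trace.re = ∑ i, ∑ k, Complex.normSq (C k i) := by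
    have : (Cᴴ * C).trace = ((∑ i, ∑ k, Complex.normSq (C k i) : ℝ) : ℂ) := by
      rw [Matrix.trace]
      push_cast
      refine Finset.sum_congr rfl fun i _ => ?_
      simp only [Matrix.diag_apply, Matrix.mul_apply, conjTranspose_apply, Complex.star_def]
      exact Finset.sum_congr rfl fun k _ => by rw [mul_comm, Complex.mul_conj]
    rw [this, Complex.ofReal_re]
  rw [h2, h3]
  have key : ∀ i, Complex.normSq ((C *ᵥ x) i) ≤
      (∑ k, Complex.normSq (C i k)) * ∑ j, Complex.normSq (x j) := by
    intro i
    have habs : ‖(C *ᵥ x) i‖ ≤ ∑ k, ‖C i k‖ * ‖x k‖ := by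
      simp only [mulVec, dotProduct]
      refine (norm_sum_le _ _).trans ?_
      exact le_of_eq (Finset.sum_congr rfl fun k _ => norm_mul _ _)
    have hcs : (∑ k, ‖C i k‖ * ‖x k‖) ^ 2 ≤
        (∑ k, ‖C i k‖ ^ 2) * ∑ k, ‖x k‖ ^ 2 :=
      Finset.sum_mul_sq_le_sq_mul_sq _ _ _
    have h4 : Complex.normSq ((C *ᵥ x) i) = ‖(C *ᵥ x) i‖ ^ 2 :=
      (Complex.sq_norm _).symm
    rw [h4]
    calc ‖(C *ᵥ x) i‖ ^ 2
        ≤ (∑ k, ‖C i k‖ * ‖x k‖) ^ 2 := by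
          apply pow_le_pow_left₀ (norm_nonneg _) habs
      _ ≤ (∑ k, ‖C i k‖ ^ 2) * ∑ k, ‖x k‖ ^ 2 := hcs
      _ = (∑ k, Complex.normSq (C i k)) * ∑ j, Complex.normSq (x j) := by
          simp [Complex.sq_norm]
  calc ∑ i, Complex.normSq ((C *ᵥ x) i)
      ≤ ∑ i, (∑ k, Complex.normSq (C i k)) * ∑ j, Complex.normSq (x j) :=
        Finset.sum_le_sum fun i _ => key i
    _ = (∑ i, ∑ k, Complex.normSq (C k i)) * ∑ j, Complex.normSq (x j) := by
        rw [← Finset.sum_mul, Finset.sum_comm]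

lemma nonempty_of_density {A B : Type*} [Fintype A] [Fintype B]
    {ρ : Matrix (A × B) (A × B) ℂ} (hρ : IsDensity ρ) : Nonempty A ∧ Nonempty B := by
  by_contra h
  have hne : IsEmpty (A × B) := by
    rcases not_and_or.mp h with h | h
    · exact ⟨fun p => (not_nonempty_iff.mp h).false p.1⟩
    · exact ⟨fun p => (not_nonempty_iff.mp h).false p.2⟩
  have h0 : ρ.trace = 0 := by simp [Matrix.trace]
  rw [hρ.2] at h0
  exact one_ne_zero h0

lemma dset_nonempty {A B : Type*} [Fintype A] [Fintype B] [DecidableEq A] [DecidableEq B]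
    {ρ : Matrix (A × B) (A × B) ℂ} (hρ : IsDensity ρ) : (Dset ρ).Nonempty := by
  obtain ⟨hA, hB⟩ := nonempty_of_density hρ
  have hkpos : (0:ℝ) < (Fintype.card B : ℝ) := by exact_mod_cast Fintype.card_pos
  set k : ℝ := (Fintype.card B : ℝ) with hk
  refine ⟨Real.logb 2 k, k⁻¹ • (1 : Matrix B B ℂ),
    ⟨psd_smul_real Matrix.PosSemidef.one (by positivity), ?_⟩, ?_⟩
  · rw [Matrix.trace_smul, Matrix.trace_one]
    rw [Complex.real_smul]
    rw [hk]
    push_cast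
    field_simp
  · have h2 : (2:ℝ) ^ Real.logb 2 k = k := Real.rpow_logb (by norm_num) (by norm_num) hkpos
    rw [kron_smul_right, Matrix.one_kronecker_one, smul_smul, h2,
      mul_inv_cancel₀ (ne_of_gt hkpos), one_smul]
    refine posSemidef_of_re (Matrix.isHermitian_one.sub hρ.1.1) fun x => ?_
    have hsub : star x ⬝ᵥ ((1 : Matrix (A × B) (A × B) ℂ) - ρ) *ᵥ x
        = star x ⬝ᵥ (1 : Matrix (A × B) (A × B) ℂ) *ᵥ x - star x ⬝ᵥ ρ *ᵥ x := by
      rw [sub_mulVec, dotProduct_sub]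
    rw [hsub, Complex.sub_re, quad_one]
    have hcs := psd_quad_le_trace hρ.1 x
    rw [hρ.2] at hcs
    simp only [Complex.ofReal_re, Complex.one_re, one_mul] at hcs ⊢
    linarith

lemma dset_bddBelow {A B : Type*} [Fintype A] [Fintype B] [DecidableEq A] [DecidableEq B]
    {ρ : Matrix (A × B) (A × B) ℂ} (hρ : IsDensity ρ) : BddBelow (Dset ρ) := by
  obtain ⟨hA, hB⟩ := nonempty_of_density hρ
  refine ⟨-Real.logb 2 (Fintype.card A), fun l hl => ?_⟩
  obtain ⟨σ, hσ, hpsd⟩ := hl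
  set M := (((2:ℝ)^l : ℝ)) • ((1 : Matrix A A ℂ) ⊗ₖ σ) - ρ with hM
  have hdiag : 0 ≤ (M.trace).re := by
    rw [Matrix.trace, Complex.re_sum]
    refine Finset.sum_nonneg fun p _ => ?_
    have := psd_quad_re_nonneg hpsd (Pi.single p 1)
    rwa [quad_single] at this
  have htr : M.trace = (((2:ℝ)^l : ℝ)) • ((Fintype.card A : ℂ) * σ.trace) - ρ.trace := by
    rw [hM, Matrix.trace_sub, Matrix.trace_smul, Matrix.trace_kronecker, Matrix.trace_one]
  rw [htr, hσ.2, hρ.2] at hdiag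
  have hcard : (0:ℝ) < (Fintype.card A : ℝ) := by exact_mod_cast Fintype.card_pos
  have h2l : ((Fintype.card A : ℝ))⁻¹ ≤ (2:ℝ)^l := by
    have h1 : (0:ℝ) ≤ ((2:ℝ)^l) * (Fintype.card A : ℝ) - 1 := by
      simpa [Complex.real_smul, Complex.sub_re, Complex.mul_re] using hdiag
    rw [inv_eq_one_div, div_le_iff₀ hcard]
    linarith
  calc -Real.logb 2 (Fintype.card A)
      = Real.logb 2 (((Fintype.card A : ℝ))⁻¹) := (Real.logb_inv _ _).symm
    _ ≤ Real.logb 2 ((2:ℝ)^l) :=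
        (Real.logb_le_logb (by norm_num) (by positivity) (by positivity)).mpr h2l
    _ = l := Real.logb_rpow (by norm_num) (by norm_num)


lemma one_prod_apply {A A' : Type*} [DecidableEq A] [DecidableEq A'] (p q : A × A') :
    (1 : Matrix (A × A') (A × A') ℂ) p q
      = (1 : Matrix A A ℂ) p.1 q.1 * (1 : Matrix A' A' ℂ) p.2 q.2 := by
  rcases p with ⟨a, a'⟩; rcases q with ⟨b, b'⟩
  by_cases h1 : a = b <;> by_cases h2 : a' = b' <;>
    simp [Matrix.one_apply, Prod.ext_iff, h1, h2]

lemma dset_add {A A' B B' : Type*} [Fintype A] [Fintype A'] [Fintype B] [Fintype B']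
    [DecidableEq A] [DecidableEq A'] [DecidableEq B] [DecidableEq B']
    {ρ1 : Matrix (A × B) (A × B) ℂ} {ρ2 : Matrix (A' × B') (A' × B') ℂ}
    (hρ1 : IsDensity ρ1) (hρ2 : IsDensity ρ2)
    {l m : ℝ} (hl : l ∈ Dset ρ1) (hm : m ∈ Dset ρ2) :
    l + m ∈ Dset (prodState ρ1 ρ2) := by
  obtain ⟨σ, hσ, hX1⟩ := hl
  obtain ⟨σ', hσ', hX2⟩ := hm
  refine ⟨σ ⊗ₖ σ', ⟨psd_kron hσ.1 hσ'.1,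
    by rw [Matrix.trace_kronecker, hσ.2, hσ'.2, mul_one]⟩, ?_⟩
  set X1 := (((2:ℝ)^l : ℝ)) • ((1 : Matrix A A ℂ) ⊗ₖ σ) - ρ1 with hX1def
  set X2 := (((2:ℝ)^m : ℝ)) • ((1 : Matrix A' A' ℂ) ⊗ₖ σ') - ρ2 with hX2def
  set Y := (((2:ℝ)^m : ℝ)) • ((1 : Matrix A' A' ℂ) ⊗ₖ σ') with hYdef
  have hY : Y.PosSemidef := psd_smul_real (psd_kron Matrix.PosSemidef.one hσ'.1)
    (le_of_lt (Real.rpow_pos_of_pos (by norm_num) m))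
  have hbig : ((X1 ⊗ₖ Y) + (ρ1 ⊗ₖ X2)).PosSemidef :=
    (psd_kron hX1 hY).add (psd_kron hρ1.1 hX2)
  have heq : (((2:ℝ)^(l+m) : ℝ)) • ((1 : Matrix (A × A') (A × A') ℂ) ⊗ₖ (σ ⊗ₖ σ'))
        - prodState ρ1 ρ2
      = ((X1 ⊗ₖ Y) + (ρ1 ⊗ₖ X2)).submatrix
          (fun p : (A × A') × (B × B') => ((p.1.1, p.2.1), (p.1.2, p.2.2)))
          (fun p : (A × A') × (B × B') => ((p.1.1, p.2.1), (p.1.2, p.2.2))) := by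
    ext ⟨⟨a, a'⟩, ⟨b, b'⟩⟩ ⟨⟨c, c'⟩, ⟨d, d'⟩⟩
    simp only [Matrix.sub_apply, Matrix.smul_apply, Matrix.add_apply, Matrix.submatrix_apply,
      kroneckerMap_apply, prodState, Matrix.of_apply, hX1def, hX2def, hYdef,
      one_prod_apply, Complex.real_smul]
    rw [Real.rpow_add (by norm_num : (0:ℝ) < 2)]
    push_cast
    ring
  rw [heq]
  exact hbig.submatrix _


lemma sum_rot3 {b1 c1 d1 : Type*} [Fintype b1] [Fintype c1] [Fintype d1]
    (f : b1 → c1 → d1 → ℂ) :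
    ∑ b, ∑ c, ∑ d, f b c d = ∑ c, ∑ d, ∑ b, f b c d :=
  Finset.sum_comm.trans (Finset.sum_congr rfl fun _ _ => Finset.sum_comm)

lemma sum_swap4 {a1 b1 c1 d1 : Type*} [Fintype a1] [Fintype b1] [Fintype c1] [Fintype d1]
    (f : a1 → b1 → c1 → d1 → ℂ) :
    ∑ a, ∑ b, ∑ c, ∑ d, f a b c d = ∑ c, ∑ d, ∑ a, ∑ b, f a b c d :=
  (Finset.sum_congr rfl fun _ _ => sum_rot3 _).trans (sum_rot3 _)

lemma quad_conj {m n : Type*} [Fintype m] [Fintype n] (E : Matrix m n ℂ)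
    (M : Matrix m m ℂ) (x : n → ℂ) :
    star (E *ᵥ x) ⬝ᵥ M *ᵥ (E *ᵥ x) = star x ⬝ᵥ (Eᴴ * M * E) *ᵥ x := by
  rw [star_mulVec, ← dotProduct_mulVec, Matrix.mulVec_mulVec, Matrix.mulVec_mulVec]

lemma ptraceA_psd {B B' : Type*} [Fintype B] [Fintype B']
    {σ : Matrix (B × B') (B × B') ℂ} (hσ : σ.PosSemidef) : (ptraceA σ).PosSemidef := by
  have h : ptraceA σ = ∑ b : B, σ.submatrix (fun i : B' => (b, i)) (fun i : B' => (b, i)) := by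
    ext i j
    simp [ptraceA, Matrix.sum_apply]
  rw [h]
  refine Finset.sum_induction _ _ (fun a b ha hb => ha.add hb) Matrix.PosSemidef.zero
    (fun b _ => hσ.submatrix _)

lemma ptraceA_trace {B B' : Type*} [Fintype B] [Fintype B']
    (σ : Matrix (B × B') (B × B') ℂ) : (ptraceA σ).trace = σ.trace := by
  simp only [Matrix.trace, Matrix.diag_apply, ptraceA, Matrix.of_apply, Fintype.sum_prod_type]
  exact Finset.sum_comm

lemma key_step {A A' B B' : Type*} [Fintype A] [Fintype A'] [Fintype B] [Fintype B']
    [DecidableEq A] [DecidableEq A'] [DecidableEq B] [DecidableEq B']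
    {ρ1 : Matrix (A × B) (A × B) ℂ} {ρ2 : Matrix (A' × B') (A' × B') ℂ}
    (hρ1 : IsDensity ρ1) (hρ2 : IsDensity ρ2)
    {l μ : ℝ} (hl : l ∈ Dset (prodState ρ1 ρ2)) (hμ : μ ∉ Dset ρ2) :
    l - μ ∈ Dset ρ1 := by
  obtain ⟨hA, hB⟩ := nonempty_of_density hρ1
  obtain ⟨σ, hσ, hPSD⟩ := hl
  have h2l : (0:ℝ) < (2:ℝ)^l := Real.rpow_pos_of_pos (by norm_num) _
  have h2μ : (0:ℝ) < (2:ℝ)^μ := Real.rpow_pos_of_pos (by norm_num) _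
  set σ2 := ptraceA σ with hσ2def
  have hσ2 : IsDensity σ2 := ⟨ptraceA_psd hσ.1, by rw [hσ2def, ptraceA_trace, hσ.2]⟩
  have hM2herm : ((((2:ℝ)^μ : ℝ)) • ((1 : Matrix A' A' ℂ) ⊗ₖ σ2) - ρ2).IsHermitian := by
    refine (herm_smul_real ?_ _).sub hρ2.1.1
    rw [Matrix.IsHermitian, kron_conjT, conjTranspose_one, hσ2.1.1]
  have hM2 : ¬ ((((2:ℝ)^μ : ℝ)) • ((1 : Matrix A' A' ℂ) ⊗ₖ σ2) - ρ2).PosSemidef :=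
    fun hc => hμ ⟨σ2, hσ2, hc⟩
  have hφex : ∃ φ : A' × B' → ℂ,
      (star φ ⬝ᵥ ((((2:ℝ)^μ : ℝ)) • ((1 : Matrix A' A' ℂ) ⊗ₖ σ2) - ρ2) *ᵥ φ).re < 0 := by
    by_contra hc
    push_neg at hc
    exact hM2 (posSemidef_of_re hM2herm fun x => hc x)
  obtain ⟨φ, hφ⟩ := hφex
  set c : ℝ := (star φ ⬝ᵥ ρ2 *ᵥ φ).re with hcdef
  set t0 : ℝ := (star φ ⬝ᵥ ((1 : Matrix A' A' ℂ) ⊗ₖ σ2) *ᵥ φ).re with ht0def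
  have hkron2psd : ((1 : Matrix A' A' ℂ) ⊗ₖ σ2).PosSemidef :=
    psd_kron Matrix.PosSemidef.one hσ2.1
  have ht0nn : 0 ≤ t0 := psd_quad_re_nonneg hkron2psd φ
  have hsplit : (star φ ⬝ᵥ ((((2:ℝ)^μ:ℝ)) • ((1 : Matrix A' A' ℂ) ⊗ₖ σ2) - ρ2) *ᵥ φ).re
      = (2:ℝ)^μ * t0 - c := by
    rw [sub_mulVec, dotProduct_sub, smul_mulVec, dotProduct_smul]
    simp [Complex.sub_re, Complex.smul_re]
    rfl
  rw [hsplit] at hφ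
  have hct : (2:ℝ)^μ * t0 < c := by linarith
  have hcpos : 0 < c := lt_of_le_of_lt (mul_nonneg (le_of_lt h2μ) ht0nn) hct
  -- the embedding matrix and contracted operator
  set E : Matrix ((A × A') × (B × B')) (A × B) ℂ :=
    Matrix.of (fun p q => if p.1.1 = q.1 ∧ p.2.1 = q.2 then φ (p.1.2, p.2.2) else 0) with hEdef
  set τ : Matrix B B ℂ := Matrix.of (fun b bb =>
      ∑ a' : A', ∑ b' : B', ∑ bb' : B', conj (φ (a', b')) * σ (b, b') (bb, bb')
        * φ (a', bb')) with hτdef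
  have EQ1 : Eᴴ * ((1 : Matrix (A × A') (A × A') ℂ) ⊗ₖ σ) * E
      = (1 : Matrix A A ℂ) ⊗ₖ τ := by
    rw [hEdef, hτdef]
    ext ⟨α, β⟩ ⟨γ, δ⟩
    simp only [Matrix.mul_apply, Matrix.conjTranspose_apply, Matrix.of_apply,
      kroneckerMap_apply, one_prod_apply, Matrix.one_apply, Fintype.sum_prod_type,
      Complex.star_def, apply_ite (starRingEnd ℂ), map_zero,
      ite_mul, mul_ite, zero_mul, mul_zero, ite_and,
      Finset.sum_ite_eq, Finset.sum_ite_eq', Finset.mem_univ, if_true,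
      Finset.sum_ite_irrel, Finset.sum_const_zero]
    by_cases h : α = γ
    · subst h
      simp only [if_pos rfl, one_mul, Finset.sum_mul]
      exact Finset.sum_congr rfl fun a' _ => Finset.sum_comm.trans
        (Finset.sum_congr rfl fun b' _ => Finset.sum_congr rfl fun bb' _ => by ring)
    · rw [if_neg (fun hh => h hh.symm), if_neg h]
  have EQ2 : Eᴴ * prodState ρ1 ρ2 * E = (star φ ⬝ᵥ ρ2 *ᵥ φ) • ρ1 := by
    rw [hEdef]
    ext ⟨α, β⟩ ⟨γ, δ⟩
    simp only [Matrix.mul_apply, Matrix.conjTranspose_apply, Matrix.of_apply, prodState,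
      Matrix.smul_apply, smul_eq_mul, dotProduct, mulVec, Pi.star_apply,
      Fintype.sum_prod_type, Complex.star_def, apply_ite (starRingEnd ℂ), map_zero,
      ite_mul, mul_ite, zero_mul, mul_zero, ite_and,
      Finset.sum_ite_eq, Finset.sum_ite_eq', Finset.mem_univ, if_true,
      Finset.sum_ite_irrel, Finset.sum_const_zero]
    simp only [Finset.sum_mul, Finset.mul_sum]
    rw [sum_swap4]
    exact Finset.sum_congr rfl fun _ _ => Finset.sum_congr rfl fun _ _ =>
      Finset.sum_congr rfl fun _ _ => Finset.sum_congr rfl fun _ _ => by ring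
  have hcc : star φ ⬝ᵥ ρ2 *ᵥ φ = ((c : ℝ) : ℂ) := psd_quad_eq_re hρ2.1 φ
  have hKey : ((((2:ℝ)^l : ℝ)) • ((1 : Matrix A A ℂ) ⊗ₖ τ) - ((c:ℝ):ℂ) • ρ1).PosSemidef := by
    have h := hPSD.conjTranspose_mul_mul_same E
    rw [Matrix.mul_sub, Matrix.sub_mul, Matrix.mul_smul, Matrix.smul_mul, EQ1, EQ2, hcc] at h
    exact h
  have hkronτ : ((1 : Matrix A A ℂ) ⊗ₖ τ).PosSemidef := by
    rw [← EQ1]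
    exact (psd_kron Matrix.PosSemidef.one hσ.1).conjTranspose_mul_mul_same E
  have hτpsd : τ.PosSemidef := by
    have h := hkronτ.submatrix (fun b : B => ((Classical.arbitrary A : A), b))
    have he : ((1 : Matrix A A ℂ) ⊗ₖ τ).submatrix
        (fun b : B => ((Classical.arbitrary A : A), b))
        (fun b : B => ((Classical.arbitrary A : A), b)) = τ := by
      ext i j
      simp [Matrix.submatrix_apply, kroneckerMap_apply, Matrix.one_apply]
    rwa [he] at h
  -- trace of τ
  have hτtr : τ.trace = ((t0 : ℝ) : ℂ) := by
    have h1 : τ.trace = star φ ⬝ᵥ ((1 : Matrix A' A' ℂ) ⊗ₖ σ2) *ᵥ φ := by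
      rw [hτdef, hσ2def]
      simp only [Matrix.trace, Matrix.diag_apply, Matrix.of_apply, dotProduct, mulVec,
        kroneckerMap_apply, Pi.star_apply, Complex.star_def, Matrix.one_apply, ptraceA,
        Fintype.sum_prod_type, ite_mul, mul_ite, zero_mul, mul_zero,
        Finset.sum_ite_irrel, Finset.sum_const_zero,
        Finset.sum_ite_eq, Finset.sum_ite_eq', Finset.mem_univ, if_true,
        Finset.mul_sum, Finset.sum_mul]
      rw [sum_rot3]
      refine Finset.sum_congr rfl fun a' _ => ?_
      refine Finset.sum_congr rfl fun b' _ => ?_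
      rw [Finset.sum_comm]
      exact Finset.sum_congr rfl fun bb' _ => Finset.sum_congr rfl fun b _ => by ring
    rw [h1, psd_quad_eq_re hkron2psd φ, ← ht0def]
  -- t0 is positive
  have ht0pos : 0 < t0 := by
    have hdiag : 0 ≤ ((((2:ℝ)^l : ℝ)) • ((1 : Matrix A A ℂ) ⊗ₖ τ)
        - ((c:ℝ):ℂ) • ρ1).trace.re := by
      rw [Matrix.trace, Complex.re_sum]
      refine Finset.sum_nonneg fun p _ => ?_
      have := psd_quad_re_nonneg hKey (Pi.single p 1)
      rwa [quad_single] at this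
    have htr : ((((2:ℝ)^l : ℝ)) • ((1 : Matrix A A ℂ) ⊗ₖ τ) - ((c:ℝ):ℂ) • ρ1).trace
        = (((2:ℝ)^l : ℝ)) • ((Fintype.card A : ℂ) * ((t0:ℝ):ℂ)) - ((c:ℝ):ℂ) := by
      rw [Matrix.trace_sub, Matrix.trace_smul, Matrix.trace_smul, Matrix.trace_kronecker,
        Matrix.trace_one, hτtr, hρ1.2, smul_eq_mul, mul_one]
    rw [htr] at hdiag
    have hcard : (0:ℝ) < (Fintype.card A : ℝ) := by exact_mod_cast Fintype.card_pos
    have h1 : (0:ℝ) ≤ ((2:ℝ)^l) * ((Fintype.card A : ℝ) * t0) - c := by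
      simpa [Complex.real_smul, Complex.sub_re, Complex.mul_re] using hdiag
    nlinarith [mul_pos h2l hcard]
  -- the witness density on B
  refine ⟨(t0⁻¹ : ℝ) • τ, ⟨psd_smul_real hτpsd (by positivity), ?_⟩, ?_⟩
  · rw [Matrix.trace_smul, hτtr, Complex.real_smul]
    push_cast
    field_simp
  · rw [kron_smul_right, smul_smul]
    refine posSemidef_of_re ?_ fun x => ?_
    · exact (herm_smul_real (by
        rw [Matrix.IsHermitian, kron_conjT, conjTranspose_one, hτpsd.1]) _).sub hρ1.1.1
    · have hx := psd_quad_re_nonneg hKey x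
      have hform : (star x ⬝ᵥ ((((2:ℝ)^l : ℝ)) • ((1 : Matrix A A ℂ) ⊗ₖ τ)
          - ((c:ℝ):ℂ) • ρ1) *ᵥ x).re
          = (2:ℝ)^l * (star x ⬝ᵥ ((1 : Matrix A A ℂ) ⊗ₖ τ) *ᵥ x).re
            - c * (star x ⬝ᵥ ρ1 *ᵥ x).re := by
        rw [sub_mulVec, dotProduct_sub, smul_mulVec, dotProduct_smul,
          smul_mulVec, dotProduct_smul]
        simp [Complex.sub_re, Complex.smul_re, Complex.mul_re]
      rw [hform] at hx
      have hform2 : (star x ⬝ᵥ ((((2:ℝ)^(l-μ) : ℝ) * (t0⁻¹:ℝ)) • ((1 : Matrix A A ℂ) ⊗ₖ τ)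
          - ρ1) *ᵥ x).re
          = ((2:ℝ)^(l-μ) * t0⁻¹) * (star x ⬝ᵥ ((1 : Matrix A A ℂ) ⊗ₖ τ) *ᵥ x).re
            - (star x ⬝ᵥ ρ1 *ᵥ x).re := by
        rw [sub_mulVec, dotProduct_sub, smul_mulVec, dotProduct_smul]
        simp [Complex.sub_re, Complex.smul_re]
      rw [hform2]
      set Q : ℝ := (star x ⬝ᵥ ((1 : Matrix A A ℂ) ⊗ₖ τ) *ᵥ x).re with hQdef
      set r1 : ℝ := (star x ⬝ᵥ ρ1 *ᵥ x).re with hr1def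
      have hQnn : 0 ≤ Q := psd_quad_re_nonneg hkronτ x
      have hr1nn : 0 ≤ r1 := psd_quad_re_nonneg hρ1.1 x
      have hmul : (2:ℝ)^(l-μ) * (2:ℝ)^μ = (2:ℝ)^l := by
        rw [← Real.rpow_add (by norm_num : (0:ℝ) < 2)]
        norm_num
      have h2lμ : (0:ℝ) < (2:ℝ)^(l-μ) := Real.rpow_pos_of_pos (by norm_num) _
      -- from 2^l Q ≥ c r1 ≥ 2^μ t0 r1 deduce 2^(l-μ) t0⁻¹ Q ≥ r1
      have step1 : (2:ℝ)^μ * t0 * r1 ≤ (2:ℝ)^l * Q := by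
        nlinarith [mul_le_mul_of_nonneg_right (le_of_lt hct) hr1nn]
      have step2 : t0 * r1 ≤ (2:ℝ)^(l-μ) * Q := by
        nlinarith [step1, hmul]
      have step3 : r1 ≤ (2:ℝ)^(l-μ) * t0⁻¹ * Q := by
        rw [← mul_le_mul_iff_right₀ ht0pos]
        calc t0 * r1 ≤ (2:ℝ)^(l-μ) * Q := step2
          _ = t0 * ((2:ℝ)^(l-μ) * t0⁻¹ * Q) := by
              field_simp
      linarith


lemma prodState_density {A A' B B' : Type*} [Fintype A] [Fintype A'] [Fintype B] [Fintype B']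
    {ρ1 : Matrix (A × B) (A × B) ℂ} {ρ2 : Matrix (A' × B') (A' × B') ℂ}
    (hρ1 : IsDensity ρ1) (hρ2 : IsDensity ρ2) : IsDensity (prodState ρ1 ρ2) := by
  constructor
  · have h := (psd_kron hρ1.1 hρ2.1).submatrix
      (fun p : (A × A') × (B × B') => ((p.1.1, p.2.1), (p.1.2, p.2.2)))
    have he : (ρ1 ⊗ₖ ρ2).submatrix
        (fun p : (A × A') × (B × B') => ((p.1.1, p.2.1), (p.1.2, p.2.2)))
        (fun p : (A × A') × (B × B') => ((p.1.1, p.2.1), (p.1.2, p.2.2)))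
        = prodState ρ1 ρ2 := by
      ext ⟨⟨a, a'⟩, ⟨b, b'⟩⟩ ⟨⟨c, c'⟩, ⟨d, d'⟩⟩
      simp [prodState, Matrix.submatrix_apply, kroneckerMap_apply]
    rwa [he] at h
  · have h : (prodState ρ1 ρ2).trace = ρ1.trace * ρ2.trace := by
      simp only [Matrix.trace, Matrix.diag_apply, prodState, Matrix.of_apply,
        Fintype.sum_prod_type, Finset.sum_mul, Finset.mul_sum]
      exact (Finset.sum_congr rfl fun a _ => sum_rot3 _).trans
        ((sum_swap4 _).trans Finset.sum_comm)
    rw [h, hρ1.2, hρ2.2, mul_one]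

/-- additivity of the conditional min-entropy:
`H_min(AA'|BB')_{ρ ⊗ ρ'} = H_min(A|B)_ρ + H_min(A'|B')_{ρ'}`. -/
theorem stmt12 {A A' B B' : Type*}
    [Fintype A] [Fintype A'] [Fintype B] [Fintype B']
    [DecidableEq A] [DecidableEq A'] [DecidableEq B] [DecidableEq B']
    (ρ1 : Matrix (A × B) (A × B) ℂ) (hρ1 : IsDensity ρ1)
    (ρ2 : Matrix (A' × B') (A' × B') ℂ) (hρ2 : IsDensity ρ2) :
    Hmin (prodState ρ1 ρ2) = Hmin ρ1 + Hmin ρ2 := by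
  have hProd : IsDensity (prodState ρ1 ρ2) := prodState_density hρ1 hρ2
  suffices h : sInf (Dset (prodState ρ1 ρ2)) = sInf (Dset ρ1) + sInf (Dset ρ2) by
    show - sInf (Dset (prodState ρ1 ρ2)) = - sInf (Dset ρ1) + - sInf (Dset ρ2)
    rw [h]; ring
  apply le_antisymm
  · have h1 : ∀ m ∈ Dset ρ2, sInf (Dset (prodState ρ1 ρ2)) ≤ sInf (Dset ρ1) + m := by
      intro m hm
      have hstep : ∀ l ∈ Dset ρ1, sInf (Dset (prodState ρ1 ρ2)) - m ≤ l := by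
        intro l hl
        have := csInf_le (dset_bddBelow hProd) (dset_add hρ1 hρ2 hl hm)
        linarith
      have h2 := le_csInf (dset_nonempty hρ1) hstep
      linarith
    have h3 : ∀ m ∈ Dset ρ2, sInf (Dset (prodState ρ1 ρ2)) - sInf (Dset ρ1) ≤ m := by
      intro m hm
      have := h1 m hm
      linarith
    have h4 := le_csInf (dset_nonempty hρ2) h3
    linarith
  · obtain ⟨l0, hl0⟩ := dset_nonempty hρ1
    obtain ⟨m0, hm0⟩ := dset_nonempty hρ2
    refine le_csInf ⟨l0 + m0, dset_add hρ1 hρ2 hl0 hm0⟩ ?_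
    intro lam hlam
    have hkey : ∀ μ, μ < sInf (Dset ρ2) → sInf (Dset ρ1) + μ ≤ lam := by
      intro μ hμlt
      have hnot : μ ∉ Dset ρ2 := fun hmem =>
        absurd (csInf_le (dset_bddBelow hρ2) hmem) (not_le.mpr hμlt)
      have hmem := key_step hρ1 hρ2 hlam hnot
      have := csInf_le (dset_bddBelow hρ1) hmem
      linarith
    by_contra hcon
    push_neg at hcon
    have hμlt : (lam - sInf (Dset ρ1) + sInf (Dset ρ2)) / 2 < sInf (Dset ρ2) := by linarith
    have := hkey _ hμlt
    linarith

end
end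

section
/- Let ρ_AB = ρ_A ⊗ ρ_B be a product density operator on H_A ⊗ H_B. Then H_min(A|B)_ρ = −log₂ ‖ρ_A‖_∞, where ‖ρ_A‖_∞ is the largest eigenvalue (operator norm) of ρ_A. -/
open Matrix
open scoped Kronecker ComplexConjugate ComplexOrder

noncomputable section

section Stmt17Aux

variable {n : Type*} [Fintype n] [DecidableEq n]

private lemma realSmul_matrix {m : Type*} (c : ℝ) (M : Matrix m m ℂ) :
    c • M = (c : ℂ) • M := by
  ext i j
  simp [Matrix.smul_apply, Complex.real_smul]

private lemma dot_eq_inner_clm (M : Matrix n n ℂ) (x : n → ℂ) :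
    star x ⬝ᵥ M *ᵥ x =
      @inner ℂ _ _ ((WithLp.equiv 2 (n → ℂ)).symm x)
        (Matrix.toEuclideanCLM (𝕜 := ℂ) M ((WithLp.equiv 2 (n → ℂ)).symm x)) := by
  rw [WithLp.equiv_symm_apply, Matrix.toEuclideanCLM_toLp, EuclideanSpace.inner_toLp_toLp,
    dotProduct_comm]

private lemma norm_sq_eq_dot (x : n → ℂ) :
    ‖(WithLp.equiv 2 (n → ℂ)).symm x‖ ^ 2 = (star x ⬝ᵥ x).re := by
  have := @inner_self_eq_norm_sq ℂ _ _ _ _ ((WithLp.equiv 2 (n → ℂ)).symm x)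
  rw [WithLp.equiv_symm_apply, EuclideanSpace.inner_toLp_toLp, dotProduct_comm] at this
  exact this.symm

/-- If `‖M‖ ≤ c` and `M` is Hermitian then `c • 1 - M` is PSD. -/
private lemma psd_sub_of_norm_le {M : Matrix n n ℂ} (hM : M.IsHermitian) {c : ℝ}
    (h : ‖Matrix.toEuclideanCLM (𝕜 := ℂ) M‖ ≤ c) :
    ((c : ℂ) • (1 : Matrix n n ℂ) - M).PosSemidef := by
  refine Matrix.PosSemidef.of_dotProduct_mulVec_nonneg ?_ ?_
  · unfold Matrix.IsHermitian
    rw [Matrix.conjTranspose_sub, Matrix.conjTranspose_smul, hM.eq,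
      Matrix.conjTranspose_one, Complex.star_def, Complex.conj_ofReal]
  · intro x
    have hherm : star (star x ⬝ᵥ M *ᵥ x) = star x ⬝ᵥ M *ᵥ x := by
      conv_lhs => rw [Matrix.star_dotProduct, star_star, Matrix.star_mulVec, hM.eq,
        ← Matrix.dotProduct_mulVec]
    have him : (star x ⬝ᵥ M *ᵥ x).im = 0 := by
      have := congrArg Complex.im hherm
      simp only [Complex.star_def, Complex.conj_im] at this
      linarith
    have hre : (star x ⬝ᵥ M *ᵥ x).re ≤ c * (star x ⬝ᵥ x).re := by
      rw [dot_eq_inner_clm]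
      set y := (WithLp.equiv 2 (n → ℂ)).symm x with hy
      calc (@inner ℂ _ _ y (Matrix.toEuclideanCLM (𝕜 := ℂ) M y)).re
          ≤ ‖(@inner ℂ _ _ y (Matrix.toEuclideanCLM (𝕜 := ℂ) M y))‖ :=
            Complex.re_le_norm _
        _ ≤ ‖y‖ * ‖Matrix.toEuclideanCLM (𝕜 := ℂ) M y‖ := norm_inner_le_norm _ _
        _ ≤ ‖y‖ * (‖Matrix.toEuclideanCLM (𝕜 := ℂ) M‖ * ‖y‖) := by
            exact mul_le_mul_of_nonneg_left
              ((Matrix.toEuclideanCLM (𝕜 := ℂ) M).le_opNorm y) (norm_nonneg _)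
        _ ≤ ‖y‖ * (c * ‖y‖) := by
            have := mul_le_mul_of_nonneg_right h (norm_nonneg y)
            exact mul_le_mul_of_nonneg_left this (norm_nonneg _)
        _ = c * ‖y‖ ^ 2 := by ring
        _ = c * (star x ⬝ᵥ x).re := by rw [hy, norm_sq_eq_dot]
    have hexp : star x ⬝ᵥ ((c : ℂ) • (1 : Matrix n n ℂ) - M) *ᵥ x =
        (c : ℂ) * (star x ⬝ᵥ x) - star x ⬝ᵥ M *ᵥ x := by
      rw [Matrix.sub_mulVec, dotProduct_sub, Matrix.smul_mulVec,
        Matrix.one_mulVec, dotProduct_smul, smul_eq_mul]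
    rw [hexp, Complex.le_def]
    constructor
    · simp only [Complex.zero_re, Complex.sub_re, Complex.re_ofReal_mul]
      linarith
    · have him2 : (star x ⬝ᵥ x).im = 0 := by
        have h0 := dotProduct_star_self_nonneg x
        exact ((Complex.le_def.mp h0).2).symm
      simp [Complex.sub_im, Complex.mul_im, Complex.ofReal_im, him, him2]

open scoped MatrixOrder in
/-- If `M` PSD and `c • 1 - M` PSD with `0 ≤ c`, then `‖M‖ ≤ c`. -/
private lemma norm_le_of_psd_sub {M : Matrix n n ℂ} (hM : M.PosSemidef) {c : ℝ}
    (hc : 0 ≤ c) (h : ((c : ℂ) • (1 : Matrix n n ℂ) - M).PosSemidef) :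
    ‖Matrix.toEuclideanCLM (𝕜 := ℂ) M‖ ≤ c := by
  refine ContinuousLinearMap.opNorm_le_bound _ hc fun y => ?_
  set x : n → ℂ := WithLp.equiv 2 (n → ℂ) y with hx
  have hy : y = (WithLp.equiv 2 (n → ℂ)).symm x := rfl
  set s := CFC.sqrt M with hs
  have hss : s * s = M := CFC.sqrt_mul_sqrt_self M hM.nonneg
  have hsh : sᴴ = s := (CFC.sqrt_nonneg M).posSemidef.isHermitian.eq
  have h2 : ((c : ℂ) • M - M * M).PosSemidef := by
    have := h.mul_mul_conjTranspose_same s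
    rw [hsh] at this
    have heq : s * ((c : ℂ) • (1 : Matrix n n ℂ) - M) * s = (c : ℂ) • M - M * M := by
      rw [Matrix.mul_sub, Matrix.mul_smul, Matrix.mul_one, Matrix.sub_mul,
        Matrix.smul_mul, hss]
      congr 1
      rw [← hss]
      noncomm_ring
    rwa [heq] at this
  -- quadratic form bounds
  have hb1 : (star x ⬝ᵥ (M * M) *ᵥ x).re ≤ c * (star x ⬝ᵥ M *ᵥ x).re := by
    have := h2.re_dotProduct_nonneg x
    rw [Matrix.sub_mulVec, dotProduct_sub, Matrix.smul_mulVec,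
      dotProduct_smul, smul_eq_mul] at this
    simp only [RCLike.re_to_complex, Complex.sub_re, Complex.re_ofReal_mul] at this
    linarith
  have hb2 : (star x ⬝ᵥ M *ᵥ x).re ≤ c * (star x ⬝ᵥ x).re := by
    have := h.re_dotProduct_nonneg x
    rw [Matrix.sub_mulVec, dotProduct_sub, Matrix.smul_mulVec,
      Matrix.one_mulVec, dotProduct_smul, smul_eq_mul] at this
    simp only [RCLike.re_to_complex, Complex.sub_re, Complex.re_ofReal_mul] at this
    linarith
  have hTy : Matrix.toEuclideanCLM (𝕜 := ℂ) M y = (WithLp.equiv 2 (n → ℂ)).symm (M *ᵥ x) := by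
    rw [hy, WithLp.equiv_symm_apply, Matrix.toEuclideanCLM_toLp]
  have hnorm2 : ‖Matrix.toEuclideanCLM (𝕜 := ℂ) M y‖ ^ 2 = (star x ⬝ᵥ (M * M) *ᵥ x).re := by
    rw [hTy, norm_sq_eq_dot]
    congr 1
    rw [Matrix.star_mulVec, Matrix.dotProduct_mulVec, Matrix.vecMul_vecMul,
      ← Matrix.dotProduct_mulVec, hM.isHermitian.eq]
  have hxnorm : ‖y‖ ^ 2 = (star x ⬝ᵥ x).re := by rw [hy, norm_sq_eq_dot]
  have hfin : ‖Matrix.toEuclideanCLM (𝕜 := ℂ) M y‖ ^ 2 ≤ (c * ‖y‖) ^ 2 := by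
    rw [hnorm2]
    calc (star x ⬝ᵥ (M * M) *ᵥ x).re ≤ c * (star x ⬝ᵥ M *ᵥ x).re := hb1
      _ ≤ c * (c * (star x ⬝ᵥ x).re) := mul_le_mul_of_nonneg_left hb2 hc
      _ = (c * ‖y‖) ^ 2 := by rw [← hxnorm]; ring
  have hpos : (0:ℝ) ≤ c * ‖y‖ := mul_nonneg hc (norm_nonneg _)
  nlinarith [norm_nonneg (Matrix.toEuclideanCLM (𝕜 := ℂ) M y)]

open scoped MatrixOrder in
/-- Kronecker product of PSD matrices is PSD. -/
private lemma kron_posSemidef {A B : Type*} [Fintype A] [Fintype B]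
    {M : Matrix A A ℂ} {N : Matrix B B ℂ} (hM : M.PosSemidef) (hN : N.PosSemidef) :
    (M ⊗ₖ N).PosSemidef := by
  classical
  obtain ⟨P, rfl⟩ := CStarAlgebra.nonneg_iff_eq_star_mul_self.mp hM.nonneg
  obtain ⟨Q, rfl⟩ := CStarAlgebra.nonneg_iff_eq_star_mul_self.mp hN.nonneg
  rw [star_eq_conjTranspose, star_eq_conjTranspose]
  have key : (Pᴴ * P) ⊗ₖ (Qᴴ * Q) = (P ⊗ₖ Q)ᴴ * (P ⊗ₖ Q) := by
    have hPQ : (P ⊗ₖ Q)ᴴ = Pᴴ ⊗ₖ Qᴴ := by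
      ext p q
      simp only [Matrix.conjTranspose_apply, Matrix.kroneckerMap_apply, star_mul']
    rw [Matrix.mul_kronecker_mul, hPQ]
  rw [key]
  exact Matrix.posSemidef_conjTranspose_mul_self _

/-- Partial trace over `B` of a PSD matrix is PSD. -/
private lemma ptraceB_posSemidef {A B : Type*} [Fintype A] [Fintype B]
    {M : Matrix (A × B) (A × B) ℂ} (hM : M.PosSemidef) : (ptraceB M).PosSemidef := by
  refine Matrix.PosSemidef.of_dotProduct_mulVec_nonneg ?_ ?_
  · unfold Matrix.IsHermitian
    ext a a'
    simp only [Matrix.conjTranspose_apply, ptraceB, Matrix.of_apply, star_sum]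
    refine Finset.sum_congr rfl fun b _ => ?_
    have := congrFun (congrFun hM.isHermitian.eq (a, b)) (a', b)
    simp only [Matrix.conjTranspose_apply] at this
    exact this
  · intro x
    have h1 : ∀ b : B, 0 ≤ star x ⬝ᵥ (M.submatrix (fun a : A => (a, b)) (fun a : A => (a, b))) *ᵥ x :=
      fun b => (hM.submatrix _).dotProduct_mulVec_nonneg x
    have h2 : (0:ℂ) ≤ ∑ b : B,
        star x ⬝ᵥ (M.submatrix (fun a : A => (a, b)) (fun a : A => (a, b))) *ᵥ x :=
      Finset.sum_nonneg fun b _ => h1 b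
    have h3 : ∑ b : B, star x ⬝ᵥ (M.submatrix (fun a : A => (a, b)) (fun a : A => (a, b))) *ᵥ x
        = star x ⬝ᵥ (ptraceB M) *ᵥ x := by
      simp only [dotProduct, Matrix.mulVec, Matrix.submatrix_apply, ptraceB,
        Matrix.of_apply]
      rw [Finset.sum_comm]
      refine Finset.sum_congr rfl fun a _ => ?_
      rw [← Finset.mul_sum]
      congr 1
      rw [Finset.sum_comm]
      exact Finset.sum_congr rfl fun a' _ => (Finset.sum_mul _ _ _).symm
    rw [← h3]; exact h2

end Stmt17Aux

section Stmt17Aux2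

/-- Partial trace computation for the relevant combination. -/
private lemma ptraceB_combo {A B : Type*} [Fintype A] [Fintype B] [DecidableEq A]
    (c : ℂ) (ρA : Matrix A A ℂ) (σ ρB : Matrix B B ℂ)
    (hσ : σ.trace = 1) (hρB : ρB.trace = 1) :
    ptraceB (c • ((1 : Matrix A A ℂ) ⊗ₖ σ) - ρA ⊗ₖ ρB)
      = c • (1 : Matrix A A ℂ) - ρA := by
  ext a a'
  have h1 : ∑ b : B, σ b b = 1 := hσ
  have h2 : ∑ b : B, ρB b b = 1 := hρB
  simp only [ptraceB, Matrix.of_apply, Matrix.sub_apply, Matrix.smul_apply,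
    Matrix.kroneckerMap_apply, smul_eq_mul, Finset.sum_sub_distrib]
  have e1 : ∀ x : B, c * ((1 : Matrix A A ℂ) (a, x).1 (a', x).1 * σ x x)
      = (c * (1 : Matrix A A ℂ) a a') * σ x x := fun x => by
    show c * ((1 : Matrix A A ℂ) a a' * σ x x) = _
    ring
  rw [Finset.sum_congr rfl (fun x _ => e1 x), ← Finset.mul_sum, ← Finset.mul_sum,
    h1, h2, mul_one, mul_one]

end Stmt17Aux2

private lemma stmt17_main {A B : Type*} [Fintype A] [Fintype B] [DecidableEq A] [DecidableEq B]
    (ρA : Matrix A A ℂ) (hA : IsDensity ρA)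
    (ρB : Matrix B B ℂ) (hB : IsDensity ρB) :
    Hmin (ρA ⊗ₖ ρB) = - Real.logb 2 ‖Matrix.toEuclideanCLM (𝕜 := ℂ) ρA‖ := by
  obtain ⟨hApsd, hAtr⟩ := hA
  obtain ⟨hBpsd, hBtr⟩ := hB
  set r : ℝ := ‖Matrix.toEuclideanCLM (𝕜 := ℂ) ρA‖ with hrdef
  have hρA0 : ρA ≠ 0 := by
    intro h0
    rw [h0, Matrix.trace_zero] at hAtr
    exact one_ne_zero hAtr.symm
  have hr : 0 < r := by
    rw [hrdef, norm_pos_iff]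
    intro h0
    apply hρA0
    have h1 : ρA = (Matrix.toEuclideanCLM (𝕜 := ℂ) (n := A)).symm
        (Matrix.toEuclideanCLM (𝕜 := ℂ) ρA) := (StarAlgEquiv.symm_apply_apply _ _).symm
    rw [h0, map_zero] at h1
    exact h1
  set S : Set ℝ := {l : ℝ | ∃ σ : Matrix B B ℂ, IsDensity σ ∧
      (((2 : ℝ) ^ l : ℝ) • ((1 : Matrix A A ℂ) ⊗ₖ σ) - ρA ⊗ₖ ρB).PosSemidef} with hSdef
  have hmem : Real.logb 2 r ∈ S := by
    refine ⟨ρB, ⟨hBpsd, hBtr⟩, ?_⟩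
    have h2 : ((2:ℝ) ^ Real.logb 2 r) = r := Real.rpow_logb (by norm_num) (by norm_num) hr
    rw [h2, realSmul_matrix]
    have heq : (r : ℂ) • ((1 : Matrix A A ℂ) ⊗ₖ ρB) - ρA ⊗ₖ ρB
        = ((r : ℂ) • (1 : Matrix A A ℂ) - ρA) ⊗ₖ ρB := by
      ext p q
      simp only [Matrix.sub_apply, Matrix.smul_apply, Matrix.kroneckerMap_apply, smul_eq_mul]
      ring
    rw [heq]
    exact kron_posSemidef (psd_sub_of_norm_le hApsd.isHermitian le_rfl) hBpsd
  have hlb : ∀ l ∈ S, Real.logb 2 r ≤ l := by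
    rintro l ⟨σ, ⟨hσpsd, hσtr⟩, hpsd⟩
    have hc : (0:ℝ) < (2:ℝ) ^ l := Real.rpow_pos_of_pos (by norm_num) l
    rw [realSmul_matrix] at hpsd
    have h1 := ptraceB_posSemidef hpsd
    rw [ptraceB_combo _ _ _ _ hσtr hBtr] at h1
    have h2 : r ≤ (2:ℝ) ^ l := norm_le_of_psd_sub hApsd hc.le h1
    have h3 : Real.logb 2 r ≤ Real.logb 2 ((2:ℝ) ^ l) :=
      Real.logb_le_logb_of_le (by norm_num) hr h2
    rwa [Real.logb_rpow (by norm_num) (by norm_num)] at h3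
  have hs : sInf S = Real.logb 2 r :=
    le_antisymm (csInf_le ⟨Real.logb 2 r, fun l hl => hlb l hl⟩ hmem)
      (le_csInf ⟨_, hmem⟩ hlb)
  unfold Hmin
  rw [← hSdef, hs]

/-- for a product state `ρ_AB = ρ_A ⊗ ρ_B`,
`H_min(A|B)_ρ = -log₂ ‖ρ_A‖_∞` (operator norm = largest eigenvalue). -/
theorem stmt17 {A B : Type*} [Fintype A] [Fintype B] [DecidableEq A] [DecidableEq B]
    (ρA : Matrix A A ℂ) (hA : IsDensity ρA)
    (ρB : Matrix B B ℂ) (hB : IsDensity ρB) :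
    Hmin (ρA ⊗ₖ ρB) = - Real.logb 2 ‖Matrix.toEuclideanCLM (𝕜 := ℂ) ρA‖ :=
  stmt17_main ρA hA ρB hB

end
end
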